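/- arXiv:2101.02329 — 2 statements merged into one kernel-verified Lean document; each statement's English description precedes it below -/
import Mathlib

section
/- The map on antichains of Φ⁺(A_{n-1}) sending A = {[i_1,j_1],…,[i_k,j_k]} (with increasing endpoints) to {[i'_1,j'_1],…,[i'_{n-1-k},j'_{n-1-k}]}, where {i'_ℓ} = {1,…,n−1} \ {j_ℓ − 1} and {j'_ℓ} = {2,…,n} \ {i_ℓ + 1}, is a well-defined involution on the set of antichains of Φ⁺(A_{n-1}): its output is an antichain and applying it twice returns A. -/
/-- Left-endpoint set of the Lalanne–Kreweras image:
`{1,…,n-1} \ {j - 1 : [i,j] ∈ A}`. -/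
def lkS (n : ℕ) (A : Finset (ℕ × ℕ)) : Finset ℕ :=
  Finset.Icc 1 (n - 1) \ A.image (fun p => p.2 - 1)

/-- Right-endpoint set of the Lalanne–Kreweras image:
`{2,…,n} \ {i + 1 : [i,j] ∈ A}`. -/
def lkT (n : ℕ) (A : Finset (ℕ × ℕ)) : Finset ℕ :=
  Finset.Icc 2 n \ A.image (fun p => p.1 + 1)

open Finset

lemma lk_congr {S S' : Finset ℕ} (h : S = S') {N} (hc : S.card = N) (hc' : S'.card = N)
    (ℓ : Fin N) : S.orderEmbOfFin hc ℓ = S'.orderEmbOfFin hc' ℓ := by subst h; rfl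


section
variable {n k : ℕ} {A : Finset (ℕ × ℕ)}


lemma lk_surj (S : Finset ℕ) {N} (h : S.card = N) {x : ℕ} (hx : x ∈ S) :
    ∃ m : Fin N, S.orderEmbOfFin h m = x := by
  have h1 := S.range_orderEmbOfFin h
  have : x ∈ Set.range (S.orderEmbOfFin h) := by rw [h1]; exact hx
  exact this

lemma lk_count (S : Finset ℕ) {N} (h : S.card = N) (ℓ : Fin N) :
    (S.filter (· < S.orderEmbOfFin h ℓ)).card = ℓ := by
  have himg : S.filter (· < S.orderEmbOfFin h ℓ) =
      (Finset.univ.filter (fun m : Fin N => m < ℓ)).image (S.orderEmbOfFin h) := by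
    ext x
    simp only [mem_filter, mem_image, mem_univ, true_and]
    constructor
    · rintro ⟨hx, hlt⟩
      obtain ⟨m, rfl⟩ := lk_surj S h hx
      exact ⟨m, (S.orderEmbOfFin h).strictMono.lt_iff_lt.mp hlt, rfl⟩
    · rintro ⟨m, hm, rfl⟩
      exact ⟨S.orderEmbOfFin_mem h m, (S.orderEmbOfFin h).strictMono hm⟩
  rw [himg, card_image_of_injective _ (S.orderEmbOfFin h).injective]
  have : Finset.univ.filter (fun m : Fin N => m < ℓ) = Finset.Iio ℓ := by ext m; simp
  rw [this, Fin.card_Iio]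

lemma lk_index (S : Finset ℕ) {N} (h : S.card = N) (ℓ : Fin N) {x : ℕ} (hx : x ∈ S)
    (hc : (S.filter (· < x)).card = ℓ) : S.orderEmbOfFin h ℓ = x := by
  obtain ⟨m, rfl⟩ := lk_surj S h hx
  have := lk_count S h m
  have : (m : ℕ) = (ℓ : ℕ) := by rw [← this, hc]
  congr 1
  exact Fin.ext this.symm

lemma lk_lt (S T : Finset ℕ) {N} (hS : S.card = N) (hT : T.card = N)
    (H : ∀ m, (T.filter (· ≤ m)).card ≤ (S.filter (· < m)).card) (ℓ : Fin N) :
    S.orderEmbOfFin hS ℓ < T.orderEmbOfFin hT ℓ := by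
  set t := T.orderEmbOfFin hT ℓ with ht
  have h1 : (ℓ : ℕ) + 1 ≤ (T.filter (· ≤ t)).card := by
    have hsub : (Finset.univ.filter (fun m : Fin N => m ≤ ℓ)).image (T.orderEmbOfFin hT)
        ⊆ T.filter (· ≤ t) := by
      intro x hx
      simp only [mem_image, mem_filter, mem_univ, true_and] at hx ⊢
      obtain ⟨m, hm, rfl⟩ := hx
      exact ⟨T.orderEmbOfFin_mem hT m, (T.orderEmbOfFin hT).monotone hm⟩
    have := card_le_card hsub
    rwa [card_image_of_injective _ (T.orderEmbOfFin hT).injective,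
      show Finset.univ.filter (fun m : Fin N => m ≤ ℓ) = Finset.Iic ℓ by ext m; simp,
      Fin.card_Iic] at this
  have h2 := H t
  by_contra hcon
  push_neg at hcon
  have hsub2 : S.filter (· < t) ⊆ S.filter (· < S.orderEmbOfFin hS ℓ) := by
    intro x hx
    simp only [mem_filter] at hx ⊢
    exact ⟨hx.1, lt_of_lt_of_le hx.2 hcon⟩
  have := card_le_card hsub2
  rw [lk_count S hS ℓ] at this
  omega

lemma lk_inj_fst (hanti : ∀ p ∈ A, ∀ q ∈ A, p ≠ q → ¬ (q.1 ≤ p.1 ∧ p.2 ≤ q.2)) :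
    Set.InjOn Prod.fst (A : Set (ℕ × ℕ)) := by
  intro p hp q hq h
  by_contra hne
  rcases le_total p.2 q.2 with h2 | h2
  · exact hanti p hp q hq hne ⟨le_of_eq h.symm, h2⟩
  · exact hanti q hq p hp (Ne.symm hne) ⟨le_of_eq h, h2⟩

lemma lk_inj_snd (hanti : ∀ p ∈ A, ∀ q ∈ A, p ≠ q → ¬ (q.1 ≤ p.1 ∧ p.2 ≤ q.2)) :
    Set.InjOn Prod.snd (A : Set (ℕ × ℕ)) := by
  intro p hp q hq h
  by_contra hne
  rcases le_total p.1 q.1 with h1 | h1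
  · exact hanti q hq p hp (Ne.symm hne) ⟨h1, le_of_eq h.symm⟩
  · exact hanti p hp q hq hne ⟨h1, le_of_eq h⟩

lemma lk_mono (hanti : ∀ p ∈ A, ∀ q ∈ A, p ≠ q → ¬ (q.1 ≤ p.1 ∧ p.2 ≤ q.2))
    {p q : ℕ × ℕ} (hp : p ∈ A) (hq : q ∈ A) : q.1 < p.1 ↔ q.2 < p.2 := by
  constructor
  · intro h
    by_contra hc
    push_neg at hc
    have hne : p ≠ q := fun he => by rw [he] at h; omega
    exact hanti p hp q hq hne ⟨le_of_lt h, hc⟩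
  · intro h
    by_contra hc
    push_neg at hc
    have hne : q ≠ p := fun he => by rw [he] at h; omega
    exact hanti q hq p hp hne ⟨hc, le_of_lt h⟩

lemma lk_count_ineq (hval : ∀ p ∈ A, 1 ≤ p.1 ∧ p.1 < p.2 ∧ p.2 ≤ n)
    (hanti : ∀ p ∈ A, ∀ q ∈ A, p ≠ q → ¬ (q.1 ≤ p.1 ∧ p.2 ≤ q.2)) (m : ℕ) :
    ((lkT n A).filter (· ≤ m)).card ≤ ((lkS n A).filter (· < m)).card := by
  set imgI := A.image (fun p => p.1 + 1) with himgI
  set imgJ := A.image (fun p => p.2 - 1) with himgJ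
  have hIsub : imgI.filter (· ≤ m) ⊆ (Finset.Icc 2 n).filter (· ≤ m) := by
    intro x hx
    simp only [himgI, mem_filter, mem_image, mem_Icc] at hx ⊢
    obtain ⟨⟨p, hp, rfl⟩, hxm⟩ := hx
    have := hval p hp
    exact ⟨⟨by omega, by omega⟩, hxm⟩
  have hJsub : imgJ.filter (· < m) ⊆ (Finset.Icc 1 (n-1)).filter (· < m) := by
    intro x hx
    simp only [himgJ, mem_filter, mem_image, mem_Icc] at hx ⊢
    obtain ⟨⟨p, hp, rfl⟩, hxm⟩ := hx
    have := hval p hp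
    exact ⟨⟨by omega, by omega⟩, hxm⟩
  have hT : (lkT n A).filter (· ≤ m) = (Finset.Icc 2 n).filter (· ≤ m) \ imgI.filter (· ≤ m) := by
    ext x
    simp only [lkT, mem_filter, mem_sdiff, ← himgI]
    tauto
  have hS : (lkS n A).filter (· < m) = (Finset.Icc 1 (n-1)).filter (· < m) \ imgJ.filter (· < m) := by
    ext x
    simp only [lkS, mem_filter, mem_sdiff, ← himgJ]
    tauto
  rw [hT, hS, card_sdiff_of_subset hIsub, card_sdiff_of_subset hJsub]
  have hac : ((Finset.Icc 2 n).filter (· ≤ m)).card ≤ ((Finset.Icc 1 (n-1)).filter (· < m)).card := by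
    apply Finset.card_le_card_of_injOn (fun y => y - 1)
    · intro y hy
      simp only [mem_coe, coe_filter, Set.mem_setOf_eq, mem_filter, mem_Icc] at hy ⊢
      omega
    · intro y hy z hz h
      simp only [coe_filter, Set.mem_setOf_eq, mem_Icc] at hy hz
      dsimp only at h
      omega
  have hbd : (imgJ.filter (· < m)).card ≤ (imgI.filter (· ≤ m)).card := by
    have h1 : imgJ.filter (· < m) = (A.filter (fun p => p.2 - 1 < m)).image (fun p => p.2 - 1) := by
      ext x
      simp only [himgJ, mem_filter, mem_image]
      constructor
      · rintro ⟨⟨p, hp, rfl⟩, hxm⟩; exact ⟨p, ⟨hp, hxm⟩, rfl⟩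
      · rintro ⟨p, ⟨hp, hm⟩, rfl⟩; exact ⟨⟨p, hp, rfl⟩, hm⟩
    have h2 : imgI.filter (· ≤ m) = (A.filter (fun p => p.1 + 1 ≤ m)).image (fun p => p.1 + 1) := by
      ext x
      simp only [himgI, mem_filter, mem_image]
      constructor
      · rintro ⟨⟨p, hp, rfl⟩, hxm⟩; exact ⟨p, ⟨hp, hxm⟩, rfl⟩
      · rintro ⟨p, ⟨hp, hm⟩, rfl⟩; exact ⟨⟨p, hp, rfl⟩, hm⟩
    rw [h1, h2]
    rw [Finset.card_image_of_injOn, Finset.card_image_of_injOn]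
    · apply card_le_card
      intro p hp
      simp only [mem_filter] at hp ⊢
      have := hval p hp.1
      exact ⟨hp.1, by omega⟩
    · intro p hp q hq h
      simp only [coe_filter, Set.mem_setOf_eq] at hp hq
      dsimp only at h
      have h1 := hval p hp.1; have h2 := hval q hq.1
      exact lk_inj_fst hanti hp.1 hq.1 (by omega)
    · intro p hp q hq h
      simp only [coe_filter, Set.mem_setOf_eq] at hp hq
      dsimp only at h
      have h1 := hval p hp.1; have h2 := hval q hq.1
      exact lk_inj_snd hanti hp.1 hq.1 (by omega)
  omega


-- set identity for lkS of the image
lemma lk_setS (hval : ∀ p ∈ A, 1 ≤ p.1 ∧ p.1 < p.2 ∧ p.2 ≤ n)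
    {N} (hS : (lkS n A).card = N) (hT : (lkT n A).card = N) :
    lkS n (Finset.image
      (fun ℓ : Fin N => (((lkS n A).orderEmbOfFin hS ℓ : ℕ), ((lkT n A).orderEmbOfFin hT ℓ : ℕ)))
      Finset.univ) = A.image Prod.fst := by
  ext x
  simp only [lkS, mem_sdiff, mem_Icc, mem_image, mem_univ, true_and]
  constructor
  · rintro ⟨⟨hx1, hx2⟩, hno⟩
    have hxn : x + 1 ∈ Finset.Icc 2 n := by
      simp only [mem_Icc]; omega
    have hnotin : x + 1 ∉ lkT n A := by
      intro hmem
      obtain ⟨ℓ, hℓ⟩ := lk_surj (lkT n A) hT hmem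
      exact hno ⟨_, ⟨ℓ, rfl⟩, by simp [hℓ]⟩
    have : x + 1 ∈ A.image (fun p => p.1 + 1) := by
      by_contra hc
      exact hnotin (by simp only [lkT, mem_sdiff]; exact ⟨hxn, hc⟩)
    obtain ⟨p, hp, hpx⟩ := mem_image.mp this
    exact ⟨p, hp, by omega⟩
  · rintro ⟨p, hp, rfl⟩
    have hv := hval p hp
    refine ⟨⟨by omega, by omega⟩, ?_⟩
    rintro ⟨q, ⟨ℓ, rfl⟩, hq2⟩
    simp only at hq2
    set y := (lkT n A).orderEmbOfFin hT ℓ with hy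
    have hmem : y ∈ lkT n A := (lkT n A).orderEmbOfFin_mem hT ℓ
    rw [lkT, mem_sdiff, mem_Icc] at hmem
    exact hmem.2 (mem_image.mpr ⟨p, hp, by omega⟩)

lemma lk_setT (hval : ∀ p ∈ A, 1 ≤ p.1 ∧ p.1 < p.2 ∧ p.2 ≤ n)
    {N} (hS : (lkS n A).card = N) (hT : (lkT n A).card = N) :
    lkT n (Finset.image
      (fun ℓ : Fin N => (((lkS n A).orderEmbOfFin hS ℓ : ℕ), ((lkT n A).orderEmbOfFin hT ℓ : ℕ)))
      Finset.univ) = A.image Prod.snd := by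
  ext x
  simp only [lkT, mem_sdiff, mem_Icc, mem_image, mem_univ, true_and]
  constructor
  · rintro ⟨⟨hx1, hx2⟩, hno⟩
    have hxn : x - 1 ∈ Finset.Icc 1 (n - 1) := by
      simp only [mem_Icc]; omega
    have hnotin : x - 1 ∉ lkS n A := by
      intro hmem
      obtain ⟨ℓ, hℓ⟩ := lk_surj (lkS n A) hS hmem
      exact hno ⟨_, ⟨ℓ, rfl⟩, by simp [hℓ]; omega⟩
    have : x - 1 ∈ A.image (fun p => p.2 - 1) := by
      by_contra hc
      exact hnotin (by simp only [lkS, mem_sdiff]; exact ⟨hxn, hc⟩)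
    obtain ⟨p, hp, hpx⟩ := mem_image.mp this
    have := hval p hp
    exact ⟨p, hp, by omega⟩
  · rintro ⟨p, hp, rfl⟩
    have hv := hval p hp
    refine ⟨⟨by omega, by omega⟩, ?_⟩
    rintro ⟨q, ⟨ℓ, rfl⟩, hq2⟩
    simp only at hq2
    set y := (lkS n A).orderEmbOfFin hS ℓ with hy
    have hmem : y ∈ lkS n A := (lkS n A).orderEmbOfFin_mem hS ℓ
    rw [lkS, mem_sdiff, mem_Icc] at hmem
    exact hmem.2 (mem_image.mpr ⟨p, hp, by omega⟩)

lemma lk_pair (hanti : ∀ p ∈ A, ∀ q ∈ A, p ≠ q → ¬ (q.1 ≤ p.1 ∧ p.2 ≤ q.2))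
    (hk : A.card = k)
    (FS : (A.image Prod.fst).card = k) (FT : (A.image Prod.snd).card = k) :
    Finset.image (fun ℓ : Fin k =>
      ((A.image Prod.fst).orderEmbOfFin FS ℓ, (A.image Prod.snd).orderEmbOfFin FT ℓ))
      Finset.univ = A := by
  symm
  apply Finset.eq_of_subset_of_card_le
  · -- A ⊆ image
    intro p hp
    have hkpos : 0 < k := by rw [← hk]; exact card_pos.mpr ⟨p, hp⟩
    have hcle : (A.filter (fun q => q.1 < p.1)).card < k := by
      have hsub : A.filter (fun q => q.1 < p.1) ⊆ A.erase p := by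
        intro q hq
        simp only [mem_filter] at hq
        exact mem_erase.mpr ⟨fun he => by rw [he] at hq; omega, hq.1⟩
      have := card_le_card hsub
      rw [card_erase_of_mem hp, hk] at this
      omega
    set ℓ : Fin k := ⟨(A.filter (fun q => q.1 < p.1)).card, hcle⟩ with hℓ
    have hfst : (A.image Prod.fst).orderEmbOfFin FS ℓ = p.1 := by
      apply lk_index
      · exact mem_image_of_mem _ hp
      · have : (A.image Prod.fst).filter (· < p.1)
            = (A.filter (fun q => q.1 < p.1)).image Prod.fst := by
          ext x
          simp only [mem_filter, mem_image]
          constructor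
          · rintro ⟨⟨q, hq, rfl⟩, hlt⟩; exact ⟨q, ⟨hq, hlt⟩, rfl⟩
          · rintro ⟨q, ⟨hq, hlt⟩, rfl⟩; exact ⟨⟨q, hq, rfl⟩, hlt⟩
        rw [this, card_image_of_injOn ((lk_inj_fst hanti).mono (by
          intro q hq; simp only [coe_filter, Set.mem_setOf_eq] at hq; exact hq.1))]
    have hsnd : (A.image Prod.snd).orderEmbOfFin FT ℓ = p.2 := by
      apply lk_index
      · exact mem_image_of_mem _ hp
      · have h1 : (A.image Prod.snd).filter (· < p.2)
            = (A.filter (fun q => q.2 < p.2)).image Prod.snd := by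
          ext x
          simp only [mem_filter, mem_image]
          constructor
          · rintro ⟨⟨q, hq, rfl⟩, hlt⟩; exact ⟨q, ⟨hq, hlt⟩, rfl⟩
          · rintro ⟨q, ⟨hq, hlt⟩, rfl⟩; exact ⟨⟨q, hq, rfl⟩, hlt⟩
        have h2 : A.filter (fun q => q.2 < p.2) = A.filter (fun q => q.1 < p.1) := by
          apply filter_congr
          intro q hq
          exact (lk_mono hanti hp hq).symm
        rw [h1, h2, card_image_of_injOn ((lk_inj_snd hanti).mono (by
          intro q hq; simp only [coe_filter, Set.mem_setOf_eq] at hq; exact hq.1))]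
    refine mem_image.mpr ⟨ℓ, mem_univ _, ?_⟩
    rw [hfst, hsnd]
  · rw [hk]
    calc (Finset.image _ Finset.univ).card ≤ (Finset.univ : Finset (Fin k)).card :=
          card_image_le
      _ = k := by simp

end

/-- The Lalanne–Kreweras map on antichains of the type `A_{n-1}` root poset
(intervals `[i,j]`, `1 ≤ i < j ≤ n`, ordered by containment, represented as
pairs in `ℕ × ℕ`), sending an antichain `A` of cardinality `k` to the family
obtained by pairing the increasing enumerations of `lkS n A` and `lkT n A`, is
a well-defined involution: its output `B` consists of valid intervals, `B` is
an antichain, and applying the map to `B` returns `A`. -/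
theorem lk_involution (n k : ℕ) (A B : Finset (ℕ × ℕ))
    (hval : ∀ p ∈ A, 1 ≤ p.1 ∧ p.1 < p.2 ∧ p.2 ≤ n)
    (hanti : ∀ p ∈ A, ∀ q ∈ A, p ≠ q → ¬ (q.1 ≤ p.1 ∧ p.2 ≤ q.2))
    (hk : A.card = k)
    (hS : (lkS n A).card = n - 1 - k) (hT : (lkT n A).card = n - 1 - k)
    (hB : B = Finset.image
      (fun ℓ : Fin (n - 1 - k) =>
        (((lkS n A).orderEmbOfFin hS ℓ : ℕ), ((lkT n A).orderEmbOfFin hT ℓ : ℕ)))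
      Finset.univ) :
    (∀ p ∈ B, 1 ≤ p.1 ∧ p.1 < p.2 ∧ p.2 ≤ n) ∧
    (∀ p ∈ B, ∀ q ∈ B, p ≠ q → ¬ (q.1 ≤ p.1 ∧ p.2 ≤ q.2)) ∧
    (∀ (hS' : (lkS n B).card = k) (hT' : (lkT n B).card = k),
      Finset.image
        (fun ℓ : Fin k =>
          (((lkS n B).orderEmbOfFin hS' ℓ : ℕ), ((lkT n B).orderEmbOfFin hT' ℓ : ℕ)))
        Finset.univ = A) := by
  subst hB
  refine ⟨?_, ?_, ?_⟩
  · intro p hp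
    obtain ⟨ℓ, -, rfl⟩ := mem_image.mp hp
    set x := (lkS n A).orderEmbOfFin hS ℓ with hxdef
    set y := (lkT n A).orderEmbOfFin hT ℓ with hydef
    have hx : x ∈ lkS n A := (lkS n A).orderEmbOfFin_mem hS ℓ
    have hy : y ∈ lkT n A := (lkT n A).orderEmbOfFin_mem hT ℓ
    rw [lkS, mem_sdiff, mem_Icc] at hx
    rw [lkT, mem_sdiff, mem_Icc] at hy
    exact ⟨hx.1.1, lk_lt _ _ hS hT (lk_count_ineq hval hanti) ℓ, hy.1.2⟩
  · intro p hp q hq hne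
    obtain ⟨a, -, rfl⟩ := mem_image.mp hp
    obtain ⟨b, -, rfl⟩ := mem_image.mp hq
    rintro ⟨h1, h2⟩
    have hba : b ≤ a := ((lkS n A).orderEmbOfFin hS).le_iff_le.mp h1
    have hab : a ≤ b := ((lkT n A).orderEmbOfFin hT).le_iff_le.mp h2
    exact hne (by rw [le_antisymm hab hba])
  · intro hS' hT'
    have e1 := lk_setS hval hS hT
    have e2 := lk_setT hval hS hT
    have FS : (A.image Prod.fst).card = k := by rw [← e1]; exact hS'
    have FT : (A.image Prod.snd).card = k := by rw [← e2]; exact hT'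
    have hfun : ∀ ℓ : Fin k,
        ((((lkS n (Finset.image (fun ℓ : Fin (n - 1 - k) =>
          (((lkS n A).orderEmbOfFin hS ℓ : ℕ), ((lkT n A).orderEmbOfFin hT ℓ : ℕ)))
          Finset.univ)).orderEmbOfFin hS' ℓ : ℕ),
         ((lkT n (Finset.image (fun ℓ : Fin (n - 1 - k) =>
          (((lkS n A).orderEmbOfFin hS ℓ : ℕ), ((lkT n A).orderEmbOfFin hT ℓ : ℕ)))
          Finset.univ)).orderEmbOfFin hT' ℓ : ℕ)) : ℕ × ℕ)
        = ((A.image Prod.fst).orderEmbOfFin FS ℓ, (A.image Prod.snd).orderEmbOfFin FT ℓ) := by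
      intro ℓ
      rw [lk_congr e1 hS' FS ℓ, lk_congr e2 hT' FT ℓ]
    rw [show (fun ℓ : Fin k =>
        (((lkS n (Finset.image (fun ℓ : Fin (n - 1 - k) =>
          (((lkS n A).orderEmbOfFin hS ℓ : ℕ), ((lkT n A).orderEmbOfFin hT ℓ : ℕ)))
          Finset.univ)).orderEmbOfFin hS' ℓ : ℕ),
         ((lkT n (Finset.image (fun ℓ : Fin (n - 1 - k) =>
          (((lkS n A).orderEmbOfFin hS ℓ : ℕ), ((lkT n A).orderEmbOfFin hT ℓ : ℕ)))
          Finset.univ)).orderEmbOfFin hT' ℓ : ℕ)))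
        = (fun ℓ : Fin k =>
          ((A.image Prod.fst).orderEmbOfFin FS ℓ, (A.image Prod.snd).orderEmbOfFin FT ℓ))
      from funext hfun]
    exact lk_pair hanti hk FS FT
end

section
/- In the Weyl group W of a crystallographic root system with a fixed bipartite Coxeter element c = c_L c_R (where c_L and c_R are products of the simple reflections over a bipartition of the Coxeter diagram), the map Flip(w) = c_L w^{-1} c_L^{-1} is an involution on the noncrossing partition lattice NC(W,c) = [e,c] in absolute order, and it satisfies Flip ∘ Krew = Krew^{-1} ∘ Flip, where Krew(w) = c w^{-1} is the Kreweras complement. -/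
open scoped Classical

/-- The absolute length of `w`: the minimal length of an expression of `w`
as a product of reflections. -/
noncomputable def absLength {B W : Type*} [Group W] {M : CoxeterMatrix B}
    (cs : CoxeterSystem M W) (w : W) : ℕ :=
  sInf {m : ℕ | ∃ l : List W, (∀ t ∈ l, cs.IsReflection t) ∧ l.length = m ∧ l.prod = w}

/-- The absolute order: `u ≤ w` iff `ℓ_T(w) = ℓ_T(u) + ℓ_T(u⁻¹ w)`. -/
def AbsLe {B W : Type*} [Group W] {M : CoxeterMatrix B}
    (cs : CoxeterSystem M W) (u w : W) : Prop :=
  absLength cs u + absLength cs (u⁻¹ * w) = absLength cs w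

section aux

variable {B W : Type*} [Group W] {M : CoxeterMatrix B} (cs : CoxeterSystem M W)

lemma absSet_nonempty (w : W) :
    {m : ℕ | ∃ l : List W, (∀ t ∈ l, cs.IsReflection t) ∧ l.length = m ∧ l.prod = w}.Nonempty := by
  obtain ⟨ω, rfl⟩ := cs.wordProd_surjective w
  exact ⟨ω.length, ω.map cs.simple, by
    simp only [List.mem_map]
    rintro t ⟨i, -, rfl⟩
    exact cs.isReflection_simple i, by simp, rfl⟩

lemma conj_list_prod (g : W) (l : List W) :
    (l.map fun t => g * t * g⁻¹).prod = g * l.prod * g⁻¹ := by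
  induction l with
  | nil => simp
  | cons a l ih => simp only [List.map_cons, List.prod_cons, ih]; group

lemma absLength_conj_le (g w : W) : absLength cs (g * w * g⁻¹) ≤ absLength cs w := by
  obtain ⟨l, hl, hlen, hprod⟩ := Nat.sInf_mem (absSet_nonempty cs w)
  apply Nat.sInf_le
  refine ⟨l.map (fun t => g * t * g⁻¹), ?_, ?_, by rw [conj_list_prod, hprod]⟩
  · simp only [List.mem_map]
    rintro t ⟨u, hu, rfl⟩
    exact (hl u hu).conj g
  · rw [List.length_map, hlen]; rfl

lemma absLength_conj (g w : W) : absLength cs (g * w * g⁻¹) = absLength cs w := by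
  refine le_antisymm (absLength_conj_le cs g w) ?_
  have := absLength_conj_le cs g⁻¹ (g * w * g⁻¹)
  simpa [mul_assoc] using this

lemma absLength_inv_le (w : W) : absLength cs w⁻¹ ≤ absLength cs w := by
  obtain ⟨l, hl, hlen, hprod⟩ := Nat.sInf_mem (absSet_nonempty cs w)
  apply Nat.sInf_le
  refine ⟨l.reverse, fun t ht => hl t (List.mem_reverse.mp ht), ?_, ?_⟩
  · rw [List.length_reverse, hlen]; rfl
  · have hmap : l.map (fun x => x⁻¹) = l.map id :=
      List.map_congr_left fun t ht => (hl t ht).inv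
    rw [← hprod, List.prod_inv_reverse, hmap, List.map_id]

lemma absLength_inv (w : W) : absLength cs w⁻¹ = absLength cs w := by
  refine le_antisymm (absLength_inv_le cs w) ?_
  simpa using absLength_inv_le cs w⁻¹

end aux

/-- In the Weyl group of a crystallographic root system with bipartite Coxeter
element `c = c_L c_R`, the map `Flip(w) = c_L w⁻¹ c_L⁻¹` is an involution on the
noncrossing partition lattice `NC(W,c) = [e,c]` (it maps `NC(W,c)` to itself and
squares to the identity), and `Flip ∘ Krew = Krew⁻¹ ∘ Flip`, where
`Krew(w) = c w⁻¹` (so `Krew⁻¹(v) = v⁻¹ c`). -/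
theorem flip_involution_and_krew {B W : Type*} [Group W] [Finite W]
    [Fintype B] [DecidableEq B] {M : CoxeterMatrix B} (cs : CoxeterSystem M W)
    (hcrys : ∀ i j : B, i ≠ j → M i j ∈ ({2, 3, 4, 6} : Set ℕ))
    (L : Finset B)
    (hL : (↑L : Set B).Pairwise fun i j => Commute (cs.simple i) (cs.simple j))
    (hR : (↑(Lᶜ) : Set B).Pairwise fun i j => Commute (cs.simple i) (cs.simple j))
    (cL cR c : W) (hcL : cL = L.noncommProd cs.simple hL)
    (hcR : cR = Lᶜ.noncommProd cs.simple hR) (hc : c = cL * cR) :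
    (∀ w : W, AbsLe cs w c → AbsLe cs (cL * w⁻¹ * cL⁻¹) c) ∧
    (∀ w : W, cL * (cL * w⁻¹ * cL⁻¹)⁻¹ * cL⁻¹ = w) ∧
    (∀ w : W, cL * (c * w⁻¹)⁻¹ * cL⁻¹ = (cL * w⁻¹ * cL⁻¹)⁻¹ * c) := by
  have invo : ∀ (s : Finset B) (h : (↑s : Set B).Pairwise
      fun i j => Commute (cs.simple i) (cs.simple j)),
      s.noncommProd cs.simple h * s.noncommProd cs.simple h = 1 := by
    intro s h
    classical
    induction s using Finset.induction with
    | empty => simp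
    | @insert a s ha ih =>
      have h' : (↑s : Set B).Pairwise fun i j => Commute (cs.simple i) (cs.simple j) :=
        h.mono (by rw [Finset.coe_insert]; exact Set.subset_insert a ↑s)
      rw [Finset.noncommProd_insert_of_notMem _ _ _ _ ha]
      have hcomm : Commute (cs.simple a) (s.noncommProd cs.simple h') := by
        apply Finset.noncommProd_commute
        intro b hb
        have h1 : a ∈ (↑(insert a s) : Set B) := by simp
        have h2 : b ∈ (↑(insert a s) : Set B) := by
          simp only [Finset.coe_insert, Set.mem_insert_iff]; exact Or.inr hb
        exact h h1 h2 (by rintro rfl; exact ha hb)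
      calc cs.simple a * s.noncommProd cs.simple h' *
            (cs.simple a * s.noncommProd cs.simple h')
          = cs.simple a * cs.simple a *
            (s.noncommProd cs.simple h' * s.noncommProd cs.simple h') := by
            rw [mul_assoc, mul_assoc, ← mul_assoc (s.noncommProd cs.simple h'),
              ← hcomm.eq, mul_assoc]
        _ = 1 := by rw [ih h', cs.simple_mul_simple_self a, mul_one]
  have hL2 : cL * cL = 1 := by rw [hcL]; exact invo L hL
  have hR2 : cR * cR = 1 := by rw [hcR]; exact invo Lᶜ hR
  have hLinv : cL⁻¹ = cL := by rw [eq_comm, eq_inv_iff_mul_eq_one, hL2]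
  have hRinv : cR⁻¹ = cR := by rw [eq_comm, eq_inv_iff_mul_eq_one, hR2]
  have hL2' : ∀ x : W, cL * (cL * x) = x := fun x => by rw [← mul_assoc, hL2, one_mul]
  have hR2' : ∀ x : W, cR * (cR * x) = x := fun x => by rw [← mul_assoc, hR2, one_mul]
  refine ⟨?_, ?_, ?_⟩
  · intro w hw
    unfold AbsLe at *
    have e1 : absLength cs (cL * w⁻¹ * cL⁻¹) = absLength cs w := by
      rw [absLength_conj, absLength_inv]
    have e2 : (cL * w⁻¹ * cL⁻¹)⁻¹ * c = cR * (c⁻¹ * w) * cR⁻¹ := by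
      simp only [hc, hLinv, hRinv, mul_inv_rev, inv_inv, mul_assoc, hL2, hR2, hL2',
        hR2', mul_one, one_mul]
    have e3 : absLength cs ((cL * w⁻¹ * cL⁻¹)⁻¹ * c) = absLength cs (w⁻¹ * c) := by
      rw [e2, absLength_conj]
      have h4 : c⁻¹ * w = (w⁻¹ * c)⁻¹ := by group
      rw [h4, absLength_inv]
    rw [e1, e3, hw]
  · intro w
    simp only [hLinv, mul_inv_rev, inv_inv, mul_assoc, hL2, hR2, hL2', hR2', mul_one,
      one_mul]
  · intro w
    simp only [hc, hLinv, hRinv, mul_inv_rev, inv_inv, mul_assoc, hL2, hR2, hL2', hR2',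
      mul_one, one_mul]
end
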